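/- Let Y be an almost square Banach space and X a closed subspace of Y such that the quotient Y/X contains no isomorphic copy of c₀. Then X is almost square. -/

import Mathlib

open TopologicalSpace Metric

def IsASQ (Y : Type*) [NormedAddCommGroup Y] [NormedSpace ℝ Y] : Prop :=
  ∀ ε : ℝ, 0 < ε → ∀ N : ℕ, ∀ y : Fin N → Y, (∀ n, ‖y n‖ = 1) →
    ∃ z : Y, ‖z‖ = 1 ∧ ∀ n, ‖y n - z‖ ≤ 1 + ε

open Finset


section Aux
variable {E : Type*} [SeminormedAddCommGroup E] [NormedSpace ℝ E]

/-- norm is convex in one scalar coefficient -/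
lemma norm_add_smul_le_max (V W : E) {t : ℝ} (ht : |t| ≤ 1) :
    ‖V + t • W‖ ≤ max ‖V + W‖ ‖V - W‖ := by
  have h1 : V + t • W = ((1 + t)/2) • (V + W) + ((1 - t)/2) • (V - W) := by
    rw [smul_add, smul_sub]; module
  rw [h1]
  have ht1 : (0:ℝ) ≤ (1 + t)/2 := by
    rw [abs_le] at ht; linarith [ht.1]
  have ht2 : (0:ℝ) ≤ (1 - t)/2 := by
    rw [abs_le] at ht; linarith [ht.2]
  calc ‖((1 + t)/2) • (V + W) + ((1 - t)/2) • (V - W)‖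
      ≤ ‖((1 + t)/2) • (V + W)‖ + ‖((1 - t)/2) • (V - W)‖ := norm_add_le _ _
    _ = ((1 + t)/2) * ‖V + W‖ + ((1 - t)/2) * ‖V - W‖ := by
        rw [norm_smul, norm_smul, Real.norm_eq_abs, Real.norm_eq_abs,
          abs_of_nonneg ht1, abs_of_nonneg ht2]
    _ ≤ ((1 + t)/2) * max ‖V + W‖ ‖V - W‖ + ((1 - t)/2) * max ‖V + W‖ ‖V - W‖ := by
        gcongr
        · exact le_max_left _ _
        · exact le_max_right _ _
    _ = max ‖V + W‖ ‖V - W‖ := by ring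

/-- sign-sums control cube sums (with an anchor vector `u`) -/
lemma cube_bound_aux (w : ℕ → E) (C : ℝ) (F : Finset ℕ) :
    ∀ u : E, (∀ σ : ℕ → ℝ, (∀ j, σ j = 1 ∨ σ j = -1) → ‖u + ∑ j ∈ F, σ j • w j‖ ≤ C) →
    ∀ a : ℕ → ℝ, (∀ j, |a j| ≤ 1) → ‖u + ∑ j ∈ F, a j • w j‖ ≤ C := by
  induction F using Finset.induction_on with
  | empty => intro u h a _; simpa using h (fun _ => 1) (fun _ => Or.inl rfl)
  | @insert j F hj ih =>
    intro u h a ha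
    rw [Finset.sum_insert hj]
    have key : ∀ s : ℝ, s = 1 ∨ s = -1 →
        ‖(u + s • w j) + ∑ i ∈ F, a i • w i‖ ≤ C := by
      intro s hs
      refine ih (u + s • w j) (fun σ hσ => ?_) a ha
      have := h (Function.update σ j s) (fun i => by
        rcases eq_or_ne i j with rfl | hi
        · simpa using hs
        · simpa [Function.update_of_ne hi] using hσ i)
      rw [Finset.sum_insert hj] at this
      have hrw : ∑ i ∈ F, Function.update σ j s i • w i = ∑ i ∈ F, σ i • w i :=
        Finset.sum_congr rfl (fun i hi => by
          rw [Function.update_of_ne (by intro hij; exact hj (hij ▸ hi))])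
      rw [Function.update_self, hrw] at this
      calc ‖u + s • w j + ∑ i ∈ F, σ i • w i‖
          = ‖u + (s • w j + ∑ i ∈ F, σ i • w i)‖ := by rw [add_assoc]
        _ ≤ C := this
    have heq : u + (a j • w j + ∑ i ∈ F, a i • w i)
        = (u + ∑ i ∈ F, a i • w i) + a j • w j := by abel
    rw [heq]
    calc ‖(u + ∑ i ∈ F, a i • w i) + a j • w j‖
        ≤ max ‖(u + ∑ i ∈ F, a i • w i) + w j‖ ‖(u + ∑ i ∈ F, a i • w i) - w j‖ :=
          norm_add_smul_le_max _ _ (ha j)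
      _ ≤ C := by
          refine max_le ?_ ?_
          · have := key 1 (Or.inl rfl)
            calc ‖u + ∑ i ∈ F, a i • w i + w j‖
                = ‖u + (1:ℝ) • w j + ∑ i ∈ F, a i • w i‖ := by rw [one_smul]; congr 1; abel
              _ ≤ C := this
          · have := key (-1) (Or.inr rfl)
            calc ‖u + ∑ i ∈ F, a i • w i - w j‖
                = ‖u + (-1:ℝ) • w j + ∑ i ∈ F, a i • w i‖ := by
                  rw [neg_one_smul]; congr 1; abel
              _ ≤ C := this

lemma cube_bound (w : ℕ → E) (C : ℝ)
    (h : ∀ F : Finset ℕ, ∀ σ : ℕ → ℝ, (∀ j, σ j = 1 ∨ σ j = -1) →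
      ‖∑ j ∈ F, σ j • w j‖ ≤ C)
    (F : Finset ℕ) (a : ℕ → ℝ) (ha : ∀ j, |a j| ≤ 1) :
    ‖∑ j ∈ F, a j • w j‖ ≤ C := by
  have := cube_bound_aux w C F 0 (fun σ hσ => by simpa using h F σ hσ) a ha
  simpa using this

lemma cube_bound_scaled (w : ℕ → E) (C : ℝ) (hC : 0 ≤ C)
    (h : ∀ F : Finset ℕ, ∀ σ : ℕ → ℝ, (∀ j, σ j = 1 ∨ σ j = -1) →
      ‖∑ j ∈ F, σ j • w j‖ ≤ C)
    (F : Finset ℕ) (a : ℕ → ℝ) {s : ℝ} (hs0 : 0 ≤ s) (ha : ∀ j ∈ F, |a j| ≤ s) :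
    ‖∑ j ∈ F, a j • w j‖ ≤ C * s := by
  rcases eq_or_lt_of_le hs0 with hs | hs
  · have : ∀ j ∈ F, a j • w j = 0 := by
      intro j hj
      have h1 := ha j hj
      have : a j = 0 := by
        have : |a j| = 0 := le_antisymm (by rw [← hs] at h1; exact h1) (abs_nonneg _)
        exact abs_eq_zero.mp this
      simp [this]
    rw [Finset.sum_congr rfl this]
    simp only [Finset.sum_const_zero, norm_zero]
    rw [← hs]; simp
  · have key : ‖∑ j ∈ F, (fun j => if j ∈ F then a j / s else 0) j • w j‖ ≤ C := by
      refine cube_bound w C h F _ (fun j => ?_)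
      by_cases hj : j ∈ F
      · simp only [hj, if_true, abs_div, abs_of_pos hs]
        rw [div_le_one hs]
        exact ha j hj
      · simp [hj, zero_le_one]
    have heq : ∑ j ∈ F, a j • w j = s • ∑ j ∈ F, (fun j => if j ∈ F then a j / s else 0) j • w j := by
      rw [Finset.smul_sum]
      refine Finset.sum_congr rfl (fun j hj => ?_)
      simp only [hj, if_true, smul_smul]
      rw [mul_div_cancel₀ _ (ne_of_gt hs)]
    rw [heq, norm_smul, Real.norm_eq_abs, abs_of_pos hs, mul_comm C s]
    exact mul_le_mul_of_nonneg_left key (le_of_lt hs)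

end Aux


section Aux2
variable {E : Type*} [NormedAddCommGroup E] [NormedSpace ℝ E]

lemma norm_add_smul_le_max' {C : ℝ} (V W : E) {t : ℝ} (ht : |t| ≤ 1)
    (h1 : ‖V + W‖ ≤ C) (h2 : ‖V - W‖ ≤ C) : ‖V + t • W‖ ≤ C :=
  (norm_add_smul_le_max V W ht).trans (max_le h1 h2)

/-- key scaling step: if the normalization of `v` is "ASQ-compatible" with unit `z`,
then `‖v + a • z‖ ≤ (1+ε) * max ‖v‖ |a|`. -/
lemma step_bound {v z : E} {ε : ℝ} (hε : 0 ≤ ε) (hz : ‖z‖ = 1)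
    (h : v ≠ 0 → ‖‖v‖⁻¹ • v + z‖ ≤ 1 + ε ∧ ‖‖v‖⁻¹ • v - z‖ ≤ 1 + ε) (a : ℝ) :
    ‖v + a • z‖ ≤ (1 + ε) * max ‖v‖ |a| := by
  by_cases hv : v = 0
  · subst hv
    simp only [zero_add, norm_smul, Real.norm_eq_abs, norm_zero, hz, mul_one]
    have : |a| ≤ max (0:ℝ) |a| := le_max_right _ _
    nlinarith [abs_nonneg a, le_max_right (0:ℝ) |a|]
  · have hvn : (0:ℝ) < ‖v‖ := by
      exact norm_pos_iff.mpr hv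
    obtain ⟨hp, hm⟩ := h hv
    -- unit vector
    set u : E := ‖v‖⁻¹ • v with hu
    have hvu : v = ‖v‖ • u := by
      rw [hu, smul_smul, mul_inv_cancel₀ (ne_of_gt hvn), one_smul]
    -- first: ‖v + t • z‖ ≤ (1+ε) * ‖v‖  for |t| ≤ ‖v‖
    have inner : ∀ t : ℝ, |t| ≤ ‖v‖ → ‖v + t • z‖ ≤ (1 + ε) * ‖v‖ := by
      intro t ht
      have : v + t • z = ‖v‖ • (u + (t / ‖v‖) • z) := by
        rw [smul_add, ← hvu, smul_smul, mul_div_cancel₀ _ (ne_of_gt hvn)]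
      rw [this, norm_smul, Real.norm_eq_abs, abs_of_pos hvn, mul_comm]
      refine mul_le_mul_of_nonneg_right ?_ (le_of_lt hvn)
      refine norm_add_smul_le_max' u z ?_ hp hm
      rw [abs_div, abs_of_pos hvn, div_le_one hvn]
      exact ht
    rcases le_or_gt |a| ‖v‖ with hcase | hcase
    · calc ‖v + a • z‖ ≤ (1 + ε) * ‖v‖ := inner a hcase
        _ ≤ (1 + ε) * max ‖v‖ |a| := by
          refine mul_le_mul_of_nonneg_left (le_max_left _ _) (by linarith)
    · -- |a| > ‖v‖ : go to the boundary and use triangle ineq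
      set s : ℝ := if 0 ≤ a then (1:ℝ) else -1 with hs
      have hsabs : |s| = 1 := by
        rcases le_or_gt 0 a with h'|h'
        · simp [hs, h']
        · simp [hs, not_le.mpr h']
      have hsa : s * a = |a| := by
        rcases le_or_gt 0 a with h'|h'
        · simp [hs, h', abs_of_nonneg h']
        · simp [hs, not_le.mpr h', abs_of_neg h']
      have h1 : ‖v + (s * ‖v‖) • z‖ ≤ (1 + ε) * ‖v‖ := by
        refine inner _ ?_
        rw [abs_mul, hsabs, one_mul, abs_of_pos hvn]
      have hsum : s * ‖v‖ + (a - s * ‖v‖) = a := by ring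
      have h2 : v + a • z = (v + (s * ‖v‖) • z) + ((a - s * ‖v‖) • z) := by
        rw [add_assoc, ← add_smul, hsum]
      have h3 : ‖(a - s * ‖v‖) • z‖ = |a| - ‖v‖ := by
        rw [norm_smul, Real.norm_eq_abs, hz, mul_one]
        rcases le_or_gt 0 a with h'|h'
        · have hs1 : s = 1 := by simp [hs, h']
          rw [hs1, one_mul, abs_of_nonneg (by rw [abs_of_nonneg h'] at hcase; linarith),
            abs_of_nonneg h']
        · have hs1 : s = -1 := by simp [hs, not_le.mpr h']
          rw [hs1, abs_of_neg h'] at *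
          have : a + ‖v‖ < 0 := by linarith
          rw [hs1] ; rw [abs_of_neg (by linarith : a - (-1) * ‖v‖ < 0)]
          ring_nf
      calc ‖v + a • z‖ ≤ ‖v + (s * ‖v‖) • z‖ + ‖(a - s * ‖v‖) • z‖ := by rw [h2]; exact norm_add_le _ _
        _ ≤ (1 + ε) * ‖v‖ + (|a| - ‖v‖) := by rw [h3]; linarith
        _ ≤ (1 + ε) * |a| := by nlinarith
        _ ≤ (1 + ε) * max ‖v‖ |a| := by
          refine mul_le_mul_of_nonneg_left (le_max_right _ _) (by linarith)

end Aux2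

open Finset


section Aux
variable {E : Type*} [SeminormedAddCommGroup E] [NormedSpace ℝ E]

lemma ASQ.sum_attachFin {M : Type*} [AddCommMonoid M] (s : Finset ℕ) {n : ℕ}
    (h : ∀ m ∈ s, m < n) (f : ℕ → M) :
    ∑ i ∈ s.attachFin h, f (i : ℕ) = ∑ j ∈ s, f j := by
  refine Finset.sum_bij (fun i _ => (i : ℕ)) ?_ ?_ ?_ ?_
  · intro a ha; exact (Finset.mem_attachFin h).mp ha
  · intro a _ b _ hab; exact Fin.ext hab
  · intro b hb; exact ⟨⟨b, h b hb⟩, (Finset.mem_attachFin h).mpr hb, rfl⟩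
  · intro a _; rfl

end Aux

section Seq

variable {Y : Type*} [NormedAddCommGroup Y] [NormedSpace ℝ Y]

open Classical in
noncomputable def ASQ.nz (u₀ : Y) (w : Y) : Y := if w = 0 then u₀ else ‖w‖⁻¹ • w

lemma ASQ.nz_of_ne (u₀ : Y) {w : Y} (hw : w ≠ 0) : ASQ.nz u₀ w = ‖w‖⁻¹ • w := by
  rw [ASQ.nz]; exact if_neg hw

lemma ASQ.nz_neg (u₀ : Y) {w : Y} (hw : w ≠ 0) : ASQ.nz u₀ (-w) = -(ASQ.nz u₀ w) := by
  rw [ASQ.nz_of_ne u₀ (neg_ne_zero.mpr hw), ASQ.nz_of_ne u₀ hw, norm_neg, smul_neg]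

lemma ASQ.nz_unit (u₀ : Y) (hu₀ : ‖u₀‖ = 1) (w : Y) : ‖ASQ.nz u₀ w‖ = 1 := by
  by_cases h : w = 0
  · rw [ASQ.nz]; rw [if_pos h]; exact hu₀
  · have h' : ‖w‖ ≠ 0 := fun h0 => h (norm_eq_zero.mp h0)
    rw [ASQ.nz_of_ne u₀ h, norm_smul, Real.norm_eq_abs,
      abs_of_nonneg (inv_nonneg.mpr (norm_nonneg w)), inv_mul_cancel₀ h']


/-- the invariant for the recursive ASQ construction -/
def SeqGood {N : ℕ} (x : Fin N → Y) (ε' : ℝ) (k : ℕ) (v : ℕ → Y) : Prop :=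
  (∀ j < k, ‖v j‖ = 1 ∧ ∀ n, ‖x n - v j‖ ≤ 1 + ε') ∧
  (∀ F : Finset ℕ, (∀ j ∈ F, j < k) → ∀ σ : ℕ → ℝ, (∀ j, σ j = 1 ∨ σ j = -1) →
    ‖∑ j ∈ F, σ j • v j‖ ≤ 2 - (2:ℝ)⁻¹ ^ k)

lemma seqGood_ext (hY : IsASQ Y) {ε' : ℝ} (hε' : 0 < ε') {N : ℕ} (x : Fin N → Y)
    (hx : ∀ n, ‖x n‖ = 1) (u₀ : Y) (hu₀ : ‖u₀‖ = 1) (k : ℕ) (v : ℕ → Y)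
    (hG : SeqGood x ε' k v) :
    ∃ z : Y, ‖z‖ = 1 ∧ (∀ n, ‖x n - z‖ ≤ 1 + ε') ∧
      SeqGood x ε' (k+1) (Function.update v k z) := by
  classical
  set εk : ℝ := min ε' ((2:ℝ)⁻¹ ^ (k+2)) with hεk
  have hεkpos : 0 < εk := lt_min hε' (by positivity)
  -- the finite family fed to ASQ
  set S' : Finset (Fin k) × (Fin k → Bool) → Y :=
    fun p => ∑ i ∈ p.1, (if p.2 i then (1:ℝ) else -1) • v (i : ℕ) with hS'
  set ι := Sum (Fin N) (Finset (Fin k) × (Fin k → Bool)) with hι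
  set el : ι → Y := Sum.elim x (fun p => ASQ.nz u₀ (S' p)) with hel
  have el_unit : ∀ i, ‖el i‖ = 1 := by
    rintro (n | p)
    · exact hx n
    · exact ASQ.nz_unit u₀ hu₀ _
  obtain ⟨z, hz1, hz2⟩ := hY εk hεkpos (Fintype.card ι)
    (el ∘ (Fintype.equivFin ι).symm) (fun m => el_unit _)
  have hz2' : ∀ i : ι, ‖el i - z‖ ≤ 1 + εk := by
    intro i
    simpa using hz2 ((Fintype.equivFin ι) i)
  refine ⟨z, hz1, fun n => le_trans (hz2' (Sum.inl n)) (by simp [min_le_left, hεk]), ?_, ?_⟩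
  · -- part 1 of SeqGood (k+1)
    intro j hj
    rcases Nat.lt_succ_iff_lt_or_eq.mp hj with hj' | rfl
    · rw [Function.update_of_ne (Nat.ne_of_lt hj')]
      exact hG.1 j hj'
    · rw [Function.update_self]
      exact ⟨hz1, fun n => le_trans (hz2' (Sum.inl n)) (by simp [min_le_left, hεk])⟩
  · -- part 2
    intro F hF σ hσ
    have hpow : (0:ℝ) < (2:ℝ)⁻¹ ^ (k+1) := by positivity
    have hpow2 : ((2:ℝ)⁻¹ ^ (k+1)) * 2 = (2:ℝ)⁻¹ ^ k := by
      rw [pow_succ]; ring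
    have hpowle : (2:ℝ)⁻¹ ^ k ≤ 1 := pow_le_one₀ (by norm_num) (by norm_num)
    by_cases hkF : k ∈ F
    · -- the interesting case
      set V : Y := ∑ j ∈ F.erase k, σ j • v j with hV
      have hFk : ∀ j ∈ F.erase k, j < k := by
        intro j hj
        have h1 := hF j (Finset.mem_of_mem_erase hj)
        exact lt_of_le_of_ne (Nat.lt_succ_iff.mp h1) (Finset.ne_of_mem_erase hj)
      have hVb : ‖V‖ ≤ 2 - (2:ℝ)⁻¹ ^ k := hG.2 (F.erase k) hFk σ hσ
      -- express V (and -V) via S'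
      have hmatch : ∀ τ : ℕ → ℝ, (∀ j, τ j = 1 ∨ τ j = -1) →
          ∃ p : Finset (Fin k) × (Fin k → Bool), S' p = ∑ j ∈ F.erase k, τ j • v j := by
        intro τ hτ
        refine ⟨⟨(F.erase k).attachFin hFk, fun i => decide (τ (i : ℕ) = 1)⟩, ?_⟩
        rw [hS']
        simp only
        rw [ASQ.sum_attachFin (F.erase k) hFk (fun j => (if decide (τ j = 1) then (1:ℝ) else -1) • v j)]
        refine Finset.sum_congr rfl (fun j _ => ?_)
        rcases hτ j with h | h
        · simp [h]
        · rw [h]; norm_num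
      have hstep : V ≠ 0 → ‖‖V‖⁻¹ • V + z‖ ≤ 1 + εk ∧ ‖‖V‖⁻¹ • V - z‖ ≤ 1 + εk := by
        intro hV0
        obtain ⟨p, hp⟩ := hmatch σ hσ
        obtain ⟨q, hq⟩ := hmatch (fun j => - σ j) (fun j => by rcases hσ j with h|h <;> simp [h])
        have hqV : S' q = -V := by
          rw [hq, hV, ← Finset.sum_neg_distrib]
          exact Finset.sum_congr rfl (fun j _ => by rw [neg_smul])
        constructor
        · have := hz2' (Sum.inr q)
          rw [hel] at this
          simp only [Sum.elim_inr] at this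
          rw [hqV] at this
          have hnzneg : ASQ.nz u₀ (-V) = -(‖V‖⁻¹ • V) := by
            rw [ASQ.nz_neg u₀ hV0, ASQ.nz_of_ne u₀ hV0]
          rw [hnzneg] at this
          calc ‖‖V‖⁻¹ • V + z‖ = ‖-(‖V‖⁻¹ • V) - z‖ := by rw [← norm_neg]; congr 1; abel
            _ ≤ 1 + εk := this
        · have := hz2' (Sum.inr p)
          rw [hel] at this
          simp only [Sum.elim_inr] at this
          rw [hp, ← hV, ASQ.nz_of_ne u₀ hV0] at this
          exact this
      -- assemble
      have hsum : ∑ j ∈ F, σ j • Function.update v k z j = V + σ k • z := by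
        rw [← Finset.sum_erase_add F _ hkF, Function.update_self]
        congr 1
        refine Finset.sum_congr rfl (fun j hj => ?_)
        rw [Function.update_of_ne (Finset.ne_of_mem_erase hj)]
      rw [hsum]
      have hb := step_bound (le_of_lt hεkpos) hz1 hstep (σ k)
      have hσk : |σ k| = 1 := by rcases hσ k with h|h <;> simp [h]
      rw [hσk] at hb
      have hmax : max ‖V‖ 1 ≤ 2 - (2:ℝ)⁻¹ ^ k := by
        refine max_le hVb (by linarith)
      have hεk2 : εk ≤ (2:ℝ)⁻¹ ^ (k+2) := min_le_right _ _
      have h22 : ((2:ℝ)⁻¹ ^ (k+2)) * 2 = (2:ℝ)⁻¹ ^ (k+1) := by rw [pow_succ]; ring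
      calc ‖V + σ k • z‖ ≤ (1 + εk) * max ‖V‖ 1 := hb
        _ ≤ (1 + εk) * (2 - (2:ℝ)⁻¹ ^ k) := by
            refine mul_le_mul_of_nonneg_left hmax (by linarith)
        _ ≤ 2 - (2:ℝ)⁻¹ ^ (k+1) := by nlinarith [hεkpos.le, hpow.le, pow_pos (by norm_num : (0:ℝ) < 2⁻¹) (k+2)]
    · -- k ∉ F : old bound suffices
      have hFk : ∀ j ∈ F, j < k := by
        intro j hj
        exact lt_of_le_of_ne (Nat.lt_succ_iff.mp (hF j hj)) (fun h => hkF (h ▸ hj))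
      have heq : ∑ j ∈ F, σ j • Function.update v k z j = ∑ j ∈ F, σ j • v j := by
        refine Finset.sum_congr rfl (fun j hj => ?_)
        rw [Function.update_of_ne (Nat.ne_of_lt (hFk j hj))]
      rw [heq]
      refine le_trans (hG.2 F hFk σ hσ) ?_
      have : (2:ℝ)⁻¹ ^ (k+1) ≤ (2:ℝ)⁻¹ ^ k := by
        refine pow_le_pow_of_le_one (by norm_num) (by norm_num) (Nat.le_succ k)
      linarith

lemma seqGood_zero {N : ℕ} (x : Fin N → Y) (ε' : ℝ) (u₀ : Y) :
    SeqGood x ε' 0 (fun _ => u₀) := by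
  refine ⟨?_, ?_⟩
  · intro j hj; exact absurd hj (Nat.not_lt_zero j)
  · intro F hF σ hσ
    have : F = ∅ := Finset.eq_empty_iff_forall_notMem.mpr
      (fun j hj => Nat.not_lt_zero j (hF j hj))
    subst this
    simp

lemma exists_seq (hY : IsASQ Y) {ε' : ℝ} (hε' : 0 < ε') {N : ℕ} (x : Fin N → Y)
    (hx : ∀ n, ‖x n‖ = 1) :
    ∃ z : ℕ → Y, (∀ k, ‖z k‖ = 1) ∧ (∀ k n, ‖x n - z k‖ ≤ 1 + ε') ∧
      (∀ F : Finset ℕ, ∀ σ : ℕ → ℝ, (∀ j, σ j = 1 ∨ σ j = -1) →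
        ‖∑ j ∈ F, σ j • z j‖ ≤ 2) := by
  classical
  obtain ⟨u₀, hu₀, -⟩ := hY ε' hε' 0 Fin.elim0 (fun n => n.elim0)
  -- the recursive chain
  let C : (k : ℕ) → {v : ℕ → Y // SeqGood x ε' k v} := fun k =>
    Nat.rec ⟨fun _ => u₀, seqGood_zero x ε' u₀⟩
      (fun k ih => ⟨Function.update ih.1 k
          (Classical.choose (seqGood_ext hY hε' x hx u₀ hu₀ k ih.1 ih.2)),
        (Classical.choose_spec (seqGood_ext hY hε' x hx u₀ hu₀ k ih.1 ih.2)).2.2⟩) k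
  set z : ℕ → Y := fun k => (C (k+1)).1 k with hz
  have hagree : ∀ k j, j < k → (C k).1 j = z j := by
    intro k
    induction k with
    | zero => intro j hj; exact absurd hj (Nat.not_lt_zero j)
    | succ k ih =>
      intro j hj
      rcases Nat.lt_succ_iff_lt_or_eq.mp hj with hj' | rfl
      · have h1 : (C (k+1)).1 j = (C k).1 j := by
          show Function.update (C k).1 k _ j = (C k).1 j
          exact Function.update_of_ne (Nat.ne_of_lt hj') _ _
        rw [h1]; exact ih j hj'
      · rfl
  have hgood : ∀ k, SeqGood x ε' (k+1) (C (k+1)).1 := fun k => (C (k+1)).2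
  refine ⟨z, ?_, ?_, ?_⟩
  · intro k
    exact ((hgood k).1 k (Nat.lt_succ_self k)).1
  · intro k n
    exact ((hgood k).1 k (Nat.lt_succ_self k)).2 n
  · intro F σ hσ
    set K : ℕ := F.sup id + 1 with hK
    have hFK : ∀ j ∈ F, j < K := by
      intro j hj
      exact Nat.lt_succ_of_le (Finset.le_sup (f := id) hj)
    have heq : ∑ j ∈ F, σ j • z j = ∑ j ∈ F, σ j • (C K).1 j := by
      refine Finset.sum_congr rfl (fun j hj => ?_)
      rw [hagree K j (hFK j hj)]
    rw [heq]
    refine le_trans ((hgood (F.sup id)).2 F hFK σ hσ) ?_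
    have : (0:ℝ) < (2:ℝ)⁻¹ ^ (F.sup id + 1) := by positivity
    linarith

end Seq


section Part2
variable {E : Type*} [NormedAddCommGroup E] [NormedSpace ℝ E]

/-- partial sums of |g(w j)| are bounded, hence they tend to 0 -/
lemma tendsto_of_hub (w : ℕ → E)
    (hub : ∀ F : Finset ℕ, ∀ σ : ℕ → ℝ, (∀ j, σ j = 1 ∨ σ j = -1) →
      ‖∑ j ∈ F, σ j • w j‖ ≤ 2) (g : E →L[ℝ] ℝ) :
    Filter.Tendsto (fun j => |g (w j)|) Filter.atTop (nhds 0) := by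
  classical
  have key : ∀ F : Finset ℕ, ∑ j ∈ F, |g (w j)| ≤ ‖g‖ * 2 := by
    intro F
    set σ : ℕ → ℝ := fun j => if 0 ≤ g (w j) then 1 else -1 with hσdef
    have hσ : ∀ j, σ j = 1 ∨ σ j = -1 := fun j => by
      by_cases h : 0 ≤ g (w j) <;> simp [hσdef, h]
    have habs : ∀ j, |g (w j)| = σ j * g (w j) := by
      intro j
      by_cases h : 0 ≤ g (w j)
      · simp [hσdef, h, abs_of_nonneg h]
      · simp [hσdef, h, abs_of_neg (not_le.mp h)]
    calc ∑ j ∈ F, |g (w j)| = ∑ j ∈ F, σ j * g (w j) :=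
          Finset.sum_congr rfl (fun j _ => habs j)
      _ = g (∑ j ∈ F, σ j • w j) := by rw [map_sum]; exact Finset.sum_congr rfl (fun j _ => by simp)
      _ ≤ |g (∑ j ∈ F, σ j • w j)| := le_abs_self _
      _ ≤ ‖g‖ * ‖∑ j ∈ F, σ j • w j‖ := g.le_opNorm _
      _ ≤ ‖g‖ * 2 := by
          exact mul_le_mul_of_nonneg_left (hub F σ hσ) (norm_nonneg g)
  have hsummable : Summable (fun j => |g (w j)|) :=
    summable_of_sum_range_le (fun n => abs_nonneg _) (fun n => key (Finset.range n))
  exact hsummable.tendsto_atTop_zero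

/-- Hahn-Banach: functional vanishing on a finite-dim subspace, large on a far point -/
lemma hb_far (E' : Submodule ℝ E) [FiniteDimensional ℝ E'] (v : E) {η : ℝ} (hη : 0 < η)
    (h : ∀ e ∈ E', η ≤ ‖v - e‖) :
    ∃ g : E →L[ℝ] ℝ, ‖g‖ ≤ 1 ∧ η ≤ g v ∧ ∀ e ∈ E', g e = 0 := by
  haveI : IsClosed (E' : Set E) := Submodule.closed_of_finiteDimensional E'
  set πc : E →L[ℝ] E ⧸ E' := LinearMap.mkContinuous E'.mkQ 1
    (fun m => by simpa using Submodule.Quotient.norm_mk_le E' m) with hπc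
  have hπv : η ≤ ‖(Submodule.Quotient.mk v : E ⧸ E')‖ := by
    by_contra hlt
    push_neg at hlt
    obtain ⟨m, hm, hmn⟩ := Submodule.Quotient.norm_mk_lt
      (Submodule.Quotient.mk v : E ⧸ E') (sub_pos.mpr hlt)
    have hvm : v - m ∈ E' := by
      rw [← Submodule.Quotient.eq E']
      exact hm.symm
    have := h (v - m) hvm
    simp only [sub_sub_cancel] at this
    linarith
  have hne : (Submodule.Quotient.mk v : E ⧸ E') ≠ 0 := by
    intro h0
    rw [h0, norm_zero] at hπv
    linarith
  obtain ⟨g', hg'1, hg'2⟩ := exists_dual_vector ℝ (Submodule.Quotient.mk v : E ⧸ E') (norm_ne_zero_iff.mpr hne)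
  refine ⟨g'.comp πc, ?_, ?_, ?_⟩
  · refine le_trans (g'.opNorm_comp_le πc) ?_
    rw [hg'1, one_mul]
    exact LinearMap.mkContinuous_norm_le _ zero_le_one _
  · have : g'.comp πc v = ‖(Submodule.Quotient.mk v : E ⧸ E')‖ := by
      rw [ContinuousLinearMap.comp_apply]
      have : πc v = Submodule.Quotient.mk v := rfl
      rw [this, hg'2]; norm_num
    rw [this]
    exact hπv
  · intro e he
    rw [ContinuousLinearMap.comp_apply]
    have : πc e = 0 := by
      show (Submodule.Quotient.mk e : E ⧸ E') = 0
      exact (Submodule.Quotient.mk_eq_zero E').mpr he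
    rw [this, map_zero]

end Part2


section Part3
variable {E : Type*} [NormedAddCommGroup E] [NormedSpace ℝ E]

lemma escape (w : ℕ → E) {δ : ℝ} (hδ : 0 < δ)
    (hub : ∀ F : Finset ℕ, ∀ σ : ℕ → ℝ, (∀ j, σ j = 1 ∨ σ j = -1) →
      ‖∑ j ∈ F, σ j • w j‖ ≤ 2)
    (hlb : ∀ k, δ ≤ ‖w k‖)
    (E' : Submodule ℝ E) [FiniteDimensional ℝ E'] (N₀ : ℕ) :
    ∃ n, N₀ ≤ n ∧ ∀ e ∈ E', δ/8 ≤ ‖w n - e‖ := by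
  classical
  set η : ℝ := δ/8 with hη
  have hw2 : ∀ n, ‖w n‖ ≤ 2 := by
    intro n
    have := hub {n} (fun _ => 1) (fun _ => Or.inl rfl)
    simpa using this
  have hδ2 : δ ≤ 2 := le_trans (hlb 0) (hw2 0)
  have hηpos : 0 < η := by positivity
  have hη1 : η ≤ 1 := by rw [hη]; linarith
  by_contra hcon
  push_neg at hcon
  -- ∀ n ≥ N₀, ∃ e ∈ E', ‖w n - e‖ < η
  have hcon' : ∀ i : ℕ, ∃ e : E', ‖w (N₀ + i) - (e : E)‖ < η := by
    intro i
    obtain ⟨e, he, hne⟩ := hcon (N₀ + i) (Nat.le_add_right _ _)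
    exact ⟨⟨e, he⟩, hne⟩
  choose ec hec using hcon'
  have hecball : ∀ i, ec i ∈ closedBall (0 : E') 3 := by
    intro i
    rw [mem_closedBall, dist_zero_right]
    have h1 : ‖(ec i : E)‖ ≤ ‖w (N₀ + i)‖ + ‖w (N₀ + i) - (ec i : E)‖ := by
      calc ‖(ec i : E)‖ = ‖w (N₀ + i) - (w (N₀ + i) - (ec i : E))‖ := by rw [sub_sub_cancel]
        _ ≤ ‖w (N₀ + i)‖ + ‖w (N₀ + i) - (ec i : E)‖ := norm_sub_le _ _
    calc ‖ec i‖ = ‖(ec i : E)‖ := rfl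
      _ ≤ 2 + η := by
          refine le_trans h1 ?_
          exact add_le_add (hw2 _) (le_of_lt (hec i))
      _ ≤ 3 := by linarith
  obtain ⟨a, -, φ, hφ, hconv⟩ := (isCompact_closedBall (0 : E') 3).tendsto_subseq hecball
  obtain ⟨i₀, hi₀⟩ := Metric.tendsto_atTop.mp hconv η hηpos
  set b : E := (a : E) with hb
  have hclose : ∀ i, i₀ ≤ i → ‖w (N₀ + φ i) - b‖ < 2*η := by
    intro i hi
    have h1 := hec (φ i)
    have h2 := hi₀ i hi
    rw [dist_eq_norm] at h2
    have h2' : ‖(ec (φ i) : E) - b‖ < η := h2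
    calc ‖w (N₀ + φ i) - b‖ = ‖(w (N₀ + φ i) - (ec (φ i) : E)) + ((ec (φ i) : E) - b)‖ := by abel_nf
      _ ≤ ‖w (N₀ + φ i) - (ec (φ i) : E)‖ + ‖(ec (φ i) : E) - b‖ := norm_add_le _ _
      _ < 2*η := by linarith
  have hbnorm : δ - 2*η ≤ ‖b‖ := by
    have h1 := hclose i₀ le_rfl
    have := hlb (N₀ + φ i₀)
    have h3 : ‖w (N₀ + φ i₀)‖ - ‖b‖ ≤ ‖w (N₀ + φ i₀) - b‖ := norm_sub_norm_le _ _
    linarith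
  obtain ⟨m, hm⟩ := exists_nat_gt (4/δ)
  set F : Finset ℕ := (Finset.range m).image (fun i => N₀ + φ (i₀ + i)) with hF
  have hinj : Set.InjOn (fun i => N₀ + φ (i₀ + i)) (Finset.range m) := by
    intro i _ j _ hij
    simp only [add_right_inj] at hij
    have := hφ.injective hij
    omega
  have hsum : ∑ n ∈ F, w n = ∑ i ∈ Finset.range m, w (N₀ + φ (i₀ + i)) :=
    Finset.sum_image (fun i hi j hj h => hinj hi hj h)
  have hbig : (m:ℝ) * (δ/2) ≤ ‖∑ n ∈ F, w n‖ := by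
    rw [hsum]
    have heq : ∑ i ∈ Finset.range m, w (N₀ + φ (i₀ + i))
        = (∑ _i ∈ Finset.range m, b) - ∑ i ∈ Finset.range m, (b - w (N₀ + φ (i₀ + i))) := by
      rw [← Finset.sum_sub_distrib]
      simp
    have hconstb : ‖∑ _i ∈ Finset.range m, b‖ = (m:ℝ) * ‖b‖ := by
      rw [Finset.sum_const, Finset.card_range, ← Nat.cast_smul_eq_nsmul ℝ, norm_smul,
        Real.norm_eq_abs, Nat.abs_cast]
    have h2 : ‖∑ i ∈ Finset.range m, (b - w (N₀ + φ (i₀ + i)))‖ ≤ (m:ℝ) * (2*η) := by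
      refine le_trans (norm_sum_le _ _) ?_
      calc ∑ i ∈ Finset.range m, ‖b - w (N₀ + φ (i₀ + i))‖
          ≤ ∑ _i ∈ Finset.range m, (2*η) := by
            refine Finset.sum_le_sum (fun i _ => ?_)
            exact le_of_lt (by rw [norm_sub_rev]; exact hclose (i₀ + i) (Nat.le_add_right _ _))
        _ = (m:ℝ) * (2*η) := by rw [Finset.sum_const, Finset.card_range, nsmul_eq_mul]
    have h1 : ‖∑ _i ∈ Finset.range m, b‖ - ‖∑ i ∈ Finset.range m, (b - w (N₀ + φ (i₀ + i)))‖
        ≤ ‖∑ i ∈ Finset.range m, w (N₀ + φ (i₀ + i))‖ := by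
      rw [heq]
      exact norm_sub_norm_le _ _
    rw [hconstb] at h1
    have h4 : (m:ℝ) * (δ/2) ≤ (m:ℝ) * ‖b‖ - (m:ℝ) * (2*η) := by
      have hm0 : (0:ℝ) ≤ (m:ℝ) := Nat.cast_nonneg m
      nlinarith [hbnorm]
    linarith
  have hsmall : ‖∑ n ∈ F, w n‖ ≤ 2 := by
    have := hub F (fun _ => 1) (fun _ => Or.inl rfl)
    simpa using this
  have hmδ : 4 < (m:ℝ) * δ := by
    rw [div_lt_iff₀ hδ] at hm
    linarith
  linarith

end Part3


section Part4
variable {E : Type*} [NormedAddCommGroup E] [NormedSpace ℝ E]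



/-- invariant for the gliding-hump selection -/
def SelGood (w : ℕ → E) (η : ℝ) (k : ℕ) (p : (ℕ → ℕ) × (ℕ → E →L[ℝ] ℝ)) : Prop :=
  (∀ i j, i < j → j < k → p.1 i < p.1 j) ∧
  (∀ i, i < k → ‖p.2 i‖ ≤ 1 ∧ η ≤ p.2 i (w (p.1 i))) ∧
  (∀ i j, i < j → j < k → p.2 j (w (p.1 i)) = 0) ∧
  (∀ i j, i < j → j < k → |p.2 i (w (p.1 j))| ≤ (η/8) * (2:ℝ)⁻¹ ^ j)

lemma selGood_ext (w : ℕ → E) {δ : ℝ} (hδ : 0 < δ)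
    (hub : ∀ F : Finset ℕ, ∀ σ : ℕ → ℝ, (∀ j, σ j = 1 ∨ σ j = -1) →
      ‖∑ j ∈ F, σ j • w j‖ ≤ 2)
    (hlb : ∀ k, δ ≤ ‖w k‖) (k : ℕ) (p : (ℕ → ℕ) × (ℕ → E →L[ℝ] ℝ))
    (hG : SelGood w (δ/8) k p) :
    ∃ q : ℕ × (E →L[ℝ] ℝ),
      SelGood w (δ/8) (k+1) (Function.update p.1 k q.1, Function.update p.2 k q.2) := by
  classical
  set η : ℝ := δ/8 with hη
  have hηpos : 0 < η := by positivity
  obtain ⟨n, g⟩ := p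
  -- the span of the previously chosen vectors
  set E' : Submodule ℝ E := Submodule.span ℝ (Set.range (fun i : Fin k => w (n i))) with hE'
  haveI : FiniteDimensional ℝ E' := FiniteDimensional.span_of_finite ℝ (Set.finite_range _)
  -- choose a threshold beyond which all old functionals are small
  have hsmall : ∀ i : Fin k, ∃ N : ℕ, ∀ m, N ≤ m → |g i (w m)| ≤ (η/8) * (2:ℝ)⁻¹ ^ k := by
    intro i
    have ht := tendsto_of_hub w hub (g i)
    have hpos : (0:ℝ) < (η/8) * (2:ℝ)⁻¹ ^ k := by positivity
    have hev : ∀ᶠ m in Filter.atTop, |g i (w m)| < (η/8) * (2:ℝ)⁻¹ ^ k :=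
      ht.eventually (gt_mem_nhds hpos)
    obtain ⟨N, hN⟩ := Filter.eventually_atTop.mp hev
    exact ⟨N, fun m hm => le_of_lt (hN m hm)⟩
  choose Nf hNf using hsmall
  set N₀ : ℕ := max ((Finset.univ : Finset (Fin k)).sup Nf) ((Finset.range k).sup n + 1) with hN₀
  obtain ⟨nk, hnk1, hnk2⟩ := escape w hδ hub hlb E' N₀
  obtain ⟨gk, hgk1, hgk2, hgk3⟩ := hb_far E' (w nk) hηpos hnk2
  refine ⟨⟨nk, gk⟩, ?_, ?_, ?_, ?_⟩
  · -- monotone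
    intro i j hij hj
    rcases Nat.lt_succ_iff_lt_or_eq.mp hj with hj' | rfl
    · simp only [Function.update_of_ne (Nat.ne_of_lt hj') ,
        Function.update_of_ne (Nat.ne_of_lt (lt_trans hij hj'))]
      exact hG.1 i j hij hj'
    · simp only [Function.update_self, Function.update_of_ne (Nat.ne_of_lt hij)]
      have h1 : n i ≤ (Finset.range j).sup n := Finset.le_sup (Finset.mem_range.mpr hij)
      have h2 : (Finset.range j).sup n + 1 ≤ N₀ := le_max_right _ _
      omega
  · intro i hi
    rcases Nat.lt_succ_iff_lt_or_eq.mp hi with hi' | rfl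
    · simp only [Function.update_of_ne (Nat.ne_of_lt hi')]
      exact hG.2.1 i hi'
    · simp only [Function.update_self]
      exact ⟨hgk1, hgk2⟩
  · intro i j hij hj
    rcases Nat.lt_succ_iff_lt_or_eq.mp hj with hj' | rfl
    · simp only [Function.update_of_ne (Nat.ne_of_lt hj'),
        Function.update_of_ne (Nat.ne_of_lt (lt_trans hij hj'))]
      exact hG.2.2.1 i j hij hj'
    · simp only [Function.update_self, Function.update_of_ne (Nat.ne_of_lt hij)]
      refine hgk3 _ ?_
      exact Submodule.subset_span ⟨⟨i, hij⟩, rfl⟩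
  · intro i j hij hj
    rcases Nat.lt_succ_iff_lt_or_eq.mp hj with hj' | rfl
    · simp only [Function.update_of_ne (Nat.ne_of_lt hj'),
        Function.update_of_ne (Nat.ne_of_lt (lt_trans hij hj'))]
      exact hG.2.2.2 i j hij hj'
    · simp only [Function.update_self, Function.update_of_ne (Nat.ne_of_lt hij)]
      have h1 : Nf ⟨i, hij⟩ ≤ N₀ :=
        le_trans (Finset.le_sup (Finset.mem_univ _)) (le_max_left _ _)
      exact hNf ⟨i, hij⟩ nk (le_trans h1 hnk1)

lemma exists_sel (w : ℕ → E) {δ : ℝ} (hδ : 0 < δ)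
    (hub : ∀ F : Finset ℕ, ∀ σ : ℕ → ℝ, (∀ j, σ j = 1 ∨ σ j = -1) →
      ‖∑ j ∈ F, σ j • w j‖ ≤ 2)
    (hlb : ∀ k, δ ≤ ‖w k‖) :
    ∃ (n : ℕ → ℕ) (g : ℕ → E →L[ℝ] ℝ), StrictMono n ∧
      (∀ i, ‖g i‖ ≤ 1 ∧ δ/8 ≤ g i (w (n i))) ∧
      (∀ i j, i < j → g j (w (n i)) = 0) ∧
      (∀ i j, i < j → |g i (w (n j))| ≤ (δ/8/8) * (2:ℝ)⁻¹ ^ j) := by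
  classical
  have hzero : SelGood w (δ/8) 0 (id, fun _ => 0) := by
    refine ⟨?_, ?_, ?_, ?_⟩ <;> intro i <;> intros <;> omega
  let C : (k : ℕ) → {p : (ℕ → ℕ) × (ℕ → E →L[ℝ] ℝ) // SelGood w (δ/8) k p} := fun k =>
    Nat.rec ⟨(id, fun _ => 0), hzero⟩
      (fun k ih => ⟨(Function.update ih.1.1 k
          (Classical.choose (selGood_ext w hδ hub hlb k ih.1 ih.2)).1,
        Function.update ih.1.2 k
          (Classical.choose (selGood_ext w hδ hub hlb k ih.1 ih.2)).2),
        Classical.choose_spec (selGood_ext w hδ hub hlb k ih.1 ih.2)⟩) k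
  set n : ℕ → ℕ := fun k => (C (k+1)).1.1 k with hn
  set g : ℕ → E →L[ℝ] ℝ := fun k => (C (k+1)).1.2 k with hg
  have hagree : ∀ k j, j < k → (C k).1.1 j = n j ∧ (C k).1.2 j = g j := by
    intro k
    induction k with
    | zero => intro j hj; omega
    | succ k ih =>
      intro j hj
      rcases Nat.lt_succ_iff_lt_or_eq.mp hj with hj' | rfl
      · constructor
        · show Function.update (C k).1.1 k _ j = n j
          rw [Function.update_of_ne (Nat.ne_of_lt hj')]
          exact (ih j hj').1
        · show Function.update (C k).1.2 k _ j = g j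
          rw [Function.update_of_ne (Nat.ne_of_lt hj')]
          exact (ih j hj').2
      · exact ⟨rfl, rfl⟩
  have key : ∀ i j, i < j → (n i < n j ∧ g j (w (n i)) = 0 ∧
      |g i (w (n j))| ≤ (δ/8/8) * (2:ℝ)⁻¹ ^ j) := by
    intro i j hij
    have hSG := (C (j+1)).2
    have h1 := hagree (j+1) i (by omega)
    have h2 := hagree (j+1) j (by omega)
    refine ⟨?_, ?_, ?_⟩
    · have := hSG.1 i j hij (Nat.lt_succ_self j)
      rwa [h1.1, h2.1] at this
    · have := hSG.2.2.1 i j hij (Nat.lt_succ_self j)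
      rwa [h1.1, h2.2] at this
    · have := hSG.2.2.2 i j hij (Nat.lt_succ_self j)
      rwa [h1.2, h2.1] at this
  refine ⟨n, g, ?_, ?_, fun i j h => (key i j h).2.1, fun i j h => (key i j h).2.2⟩
  · exact strictMono_nat_of_lt_succ (fun k => (key k (k+1) (Nat.lt_succ_self k)).1)
  · intro i
    have hSG := (C (i+1)).2
    have h1 := hagree (i+1) i (by omega)
    have := hSG.2.1 i (Nat.lt_succ_self i)
    rwa [h1.1, h1.2] at this

end Part4


section Part5
variable {E : Type*} [NormedAddCommGroup E] [NormedSpace ℝ E] [CompleteSpace E]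



local notation "C₀" => ZeroAtInftyContinuousMap ℕ ℝ

lemma c0_coord_le (a : C₀) (k : ℕ) : |a k| ≤ ‖a‖ := by
  have h1 : ‖a.toBCF k‖ ≤ ‖a.toBCF‖ := BoundedContinuousFunction.norm_coe_le_norm a.toBCF k
  rwa [ZeroAtInftyContinuousMap.norm_toBCF_eq_norm] at h1

lemma c0_norm_le (a : C₀) {C : ℝ} (hC : 0 ≤ C) (h : ∀ k, |a k| ≤ C) : ‖a‖ ≤ C := by
  rw [← ZeroAtInftyContinuousMap.norm_toBCF_eq_norm]
  exact BoundedContinuousFunction.norm_le hC |>.mpr h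

lemma c0_cofinite (a : C₀) {c : ℝ} (hc : 0 < c) : {k : ℕ | c < |a k|}.Finite := by
  have h1 : Filter.Tendsto a (Filter.cocompact ℕ) (nhds 0) :=
    ZeroAtInftyContinuousMap.zero_at_infty' a
  rw [Filter.cocompact_eq_cofinite] at h1
  have h2 : ∀ᶠ k in Filter.cofinite, |a k| < c := by
    have := Metric.tendsto_nhds.mp h1 c hc
    refine this.mono (fun k hk => ?_)
    rwa [Real.dist_eq, sub_zero] at hk
  have := Filter.eventually_cofinite.mp h2
  refine this.subset (fun k hk => ?_)
  simp only [Set.mem_setOf_eq] at *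
  linarith [hk]

lemma embed_c0 (v : ℕ → E) (g : ℕ → E →L[ℝ] ℝ) {η : ℝ} (hη : 0 < η)
    (hub : ∀ F : Finset ℕ, ∀ σ : ℕ → ℝ, (∀ j, σ j = 1 ∨ σ j = -1) →
      ‖∑ j ∈ F, σ j • v j‖ ≤ 2)
    (hg1 : ∀ i, ‖g i‖ ≤ 1) (hg2 : ∀ i, η ≤ g i (v i))
    (hg3 : ∀ i j, i < j → g j (v i) = 0)
    (hg4 : ∀ i j, i < j → |g i (v j)| ≤ (η/8) * (2:ℝ)⁻¹ ^ j) :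
    ∃ W : Submodule ℝ E, IsClosed (W : Set E) ∧ Nonempty (W ≃L[ℝ] C₀) := by
  classical
  -- summability
  have hsum : ∀ a : C₀, Summable (fun k => a k • v k) := by
    intro a
    rw [summable_iff_vanishing]
    intro e he
    obtain ⟨ε, hε, hball⟩ := Metric.mem_nhds_iff.mp he
    set c : ℝ := ε/3 with hc
    have hcpos : 0 < c := by positivity
    set s : Finset ℕ := (c0_cofinite a hcpos).toFinset with hs
    refine ⟨s, fun t ht => ?_⟩
    have hbound : ‖∑ k ∈ t, a k • v k‖ ≤ 2 * c := by
      refine cube_bound_scaled v 2 (by norm_num) hub t a (le_of_lt hcpos) (fun k hk => ?_)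
      by_contra hgt
      push_neg at hgt
      have hks : k ∈ s := by
        rw [hs, Set.Finite.mem_toFinset]
        exact hgt
      exact (Finset.disjoint_left.mp ht hk) hks
    refine hball ?_
    rw [Metric.mem_ball, dist_zero_right]
    calc ‖∑ k ∈ t, a k • v k‖ ≤ 2 * c := hbound
      _ < ε := by rw [hc]; linarith
  -- the linear map
  set Tfun : C₀ → E := fun a => ∑' k, a k • v k with hTfun
  have hadd : ∀ a b : C₀, Tfun (a + b) = Tfun a + Tfun b := by
    intro a b
    rw [hTfun]
    simp only
    rw [← Summable.tsum_add (hsum a) (hsum b)]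
    congr 1
    funext k
    rw [ZeroAtInftyContinuousMap.coe_add, Pi.add_apply, add_smul]
  have hsmul : ∀ (r : ℝ) (a : C₀), Tfun (r • a) = r • Tfun a := by
    intro r a
    rw [hTfun]
    simp only
    rw [← tsum_const_smul'']
    congr 1
    funext k
    rw [ZeroAtInftyContinuousMap.coe_smul, Pi.smul_apply, smul_smul, smul_eq_mul]
  set T : C₀ →ₗ[ℝ] E := { toFun := Tfun, map_add' := hadd, map_smul' := hsmul } with hT
  -- upper bound
  have hTub : ∀ a : C₀, ‖T a‖ ≤ 2 * ‖a‖ := by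
    intro a
    have hpart : ∀ F : Finset ℕ, ‖∑ k ∈ F, a k • v k‖ ≤ 2 * ‖a‖ :=
      fun F => cube_bound_scaled v 2 (by norm_num) hub F a (norm_nonneg a)
        (fun k _ => c0_coord_le a k)
    have h1 : Filter.Tendsto (fun F : Finset ℕ => ‖∑ k ∈ F, a k • v k‖)
        Filter.atTop (nhds ‖T a‖) := (hsum a).hasSum.norm
    exact le_of_tendsto h1 (Filter.Eventually.of_forall hpart)
  -- lower bound
  have hTlb : ∀ a : C₀, ‖a‖ ≤ (4/(3*η)) * ‖T a‖ := by
    intro a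
    have key : ∀ k, |a k| ≤ ‖T a‖/η + ‖a‖/4 := by
      intro k
      obtain ⟨c, hc⟩ : ∃ c : ℕ → ℝ, ∀ j, c j = a j * g k (v j) := ⟨_, fun _ => rfl⟩
      obtain ⟨c', hc'⟩ : ∃ c' : ℕ → ℝ, ∀ j, c' j = if j = k then 0 else c j :=
        ⟨_, fun _ => rfl⟩
      obtain ⟨d, hd⟩ : ∃ d : ℕ → ℝ, ∀ j, d j = ‖a‖ * ((η/8) * (2:ℝ)⁻¹ ^ j) :=
        ⟨_, fun _ => rfl⟩
      have hsummc : Summable c := by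
        have h0 := (hsum a).map (g k).toLinearMap.toAddMonoidHom (g k).continuous
        exact h0.congr (fun j => by rw [hc j]; simp [mul_comm])
      have htsum : g k (T a) = ∑' j, c j := by
        have h1 : T a = ∑' j, a j • v j := rfl
        rw [h1, ContinuousLinearMap.map_tsum (g k) (hsum a)]
        exact tsum_congr (fun j => by rw [hc j]; simp [mul_comm])
      have hd_nonneg : ∀ j, 0 ≤ d j := by
        intro j; rw [hd j]; positivity
      have hc'_le : ∀ j, |c' j| ≤ d j := by
        intro j
        rcases lt_trichotomy j k with hjk | rfl | hjk
        · have h0 : c' j = 0 := by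
            rw [hc' j, if_neg (Nat.ne_of_lt hjk), hc j, hg3 j k hjk, mul_zero]
          rw [h0, abs_zero]; exact hd_nonneg j
        · have h0 : c' j = 0 := by rw [hc' j, if_pos rfl]
          rw [h0, abs_zero]; exact hd_nonneg j
        · rw [hc' j, if_neg (Nat.ne_of_gt hjk), hc j, hd j, abs_mul]
          exact mul_le_mul (c0_coord_le a j) (hg4 k j hjk) (abs_nonneg _) (norm_nonneg a)
      have hsummd : Summable d := by
        refine Summable.congr ?_ (fun j => (hd j).symm)
        refine Summable.mul_left _ (Summable.mul_left _ ?_)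
        exact summable_geometric_of_lt_one (by norm_num) (by norm_num)
      have hsummc' : Summable c' := by
        refine Summable.of_abs ?_
        exact Summable.of_nonneg_of_le (fun j => abs_nonneg _) hc'_le hsummd
      have hsplit : ∑' j, c j = c k + ∑' j, c' j := by
        have heq : c = (fun j => (if j = k then c k else 0) + c' j) := by
          funext j
          rcases eq_or_ne j k with rfl | hj
          · rw [hc' j, if_pos rfl, if_pos rfl, add_zero]
          · rw [hc' j, if_neg hj, if_neg hj, zero_add]
        rw [heq, Summable.tsum_add (hasSum_ite_eq k (c k)).summable hsummc', tsum_ite_eq]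
        simp only [if_pos rfl]
        rw [hc' k, if_pos rfl]
        norm_num
      have hbound1 : |∑' j, c' j| ≤ η * ‖a‖ / 4 := by
        have h1 : |∑' j, c' j| ≤ ∑' j, |c' j| := by
          have := norm_tsum_le_tsum_norm (f := c') (by simpa [Real.norm_eq_abs] using hsummc'.abs)
          simpa [Real.norm_eq_abs] using this
        have h2 : ∑' j, |c' j| ≤ ∑' j, d j :=
          Summable.tsum_le_tsum hc'_le (hsummc'.abs) hsummd
        have h3 : ∑' j, d j = ‖a‖ * ((η/8) * 2) := by
          rw [tsum_congr hd, tsum_mul_left, tsum_mul_left,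
            tsum_geometric_of_lt_one (by norm_num) (by norm_num)]
          norm_num
        rw [h3] at h2
        calc |∑' j, c' j| ≤ ‖a‖ * ((η/8) * 2) := le_trans h1 h2
          _ = η * ‖a‖ / 4 := by ring
      have hck : η * |a k| ≤ |c k| := by
        rw [hc k, abs_mul]
        have h1 : η ≤ |g k (v k)| := le_trans (hg2 k) (le_abs_self _)
        calc η * |a k| ≤ |g k (v k)| * |a k| := mul_le_mul_of_nonneg_right h1 (abs_nonneg _)
          _ = |a k| * |g k (v k)| := mul_comm _ _
      have hgTa : |g k (T a)| ≤ ‖T a‖ := by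
        calc |g k (T a)| ≤ ‖g k‖ * ‖T a‖ := (g k).le_opNorm _
          _ ≤ 1 * ‖T a‖ := mul_le_mul_of_nonneg_right (hg1 k) (norm_nonneg _)
          _ = ‖T a‖ := one_mul _
      have hckb : |c k| ≤ ‖T a‖ + η * ‖a‖ / 4 := by
        have h0 : c k = g k (T a) - ∑' j, c' j := by rw [htsum, hsplit]; ring
        rw [h0]
        calc |g k (T a) - ∑' j, c' j| ≤ |g k (T a)| + |∑' j, c' j| := abs_sub _ _
          _ ≤ ‖T a‖ + η * ‖a‖ / 4 := add_le_add hgTa hbound1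
      have hfin : η * |a k| ≤ ‖T a‖ + η * ‖a‖ / 4 := le_trans hck hckb
      have h5 : |a k| ≤ (‖T a‖ + η * ‖a‖ / 4) / η := by
        rw [le_div_iff₀ hη]; nlinarith [hfin]
      have heq2 : (‖T a‖ + η * ‖a‖ / 4) / η = ‖T a‖/η + ‖a‖/4 := by
        field_simp
      rw [heq2] at h5
      exact h5
    have h2 : ‖a‖ ≤ ‖T a‖/η + ‖a‖/4 := by
      refine c0_norm_le a ?_ key
      have := norm_nonneg (T a)
      have := norm_nonneg a
      positivity
    have hTa := norm_nonneg (T a)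
    have h3 : (3/4) * ‖a‖ ≤ ‖T a‖/η := by linarith [h2]
    have h4 : (3/4) * ‖a‖ * η ≤ ‖T a‖ := (le_div_iff₀ hη).mp h3
    rw [div_mul_eq_mul_div, le_div_iff₀ (by positivity : (0:ℝ) < 3*η)]
    nlinarith [h4]
  -- build the continuous linear map and the equivalence
  set Tc : C₀ →L[ℝ] E := T.mkContinuous 2 hTub with hTc
  have hTcapp : ∀ a, Tc a = T a := fun a => rfl
  set K : NNReal := Real.toNNReal (4/(3*η)) with hK
  have hKco : (K : ℝ) = 4/(3*η) := Real.coe_toNNReal _ (by positivity)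
  have hanti : AntilipschitzWith K Tc := by
    refine ContinuousLinearMap.antilipschitz_of_bound Tc (fun a => ?_)
    rw [hKco, hTcapp]
    exact hTlb a
  have hclosed : IsClosed (Set.range Tc) := hanti.isClosed_range Tc.uniformContinuous
  have hinj : Function.Injective Tc := hanti.injective
  refine ⟨LinearMap.range (Tc : C₀ →ₗ[ℝ] E), ?_, ?_⟩
  · rw [LinearMap.coe_range]
    exact hclosed
  · set e : C₀ ≃ₗ[ℝ] LinearMap.range (Tc : C₀ →ₗ[ℝ] E) :=
      LinearEquiv.ofInjective (Tc : C₀ →ₗ[ℝ] E) hinj with he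
    have hecoe : ∀ a, ((e a : LinearMap.range (Tc : C₀ →ₗ[ℝ] E)) : E) = Tc a := by
      intro a
      rfl
    have hcont1 : Continuous e := by
      refine continuous_induced_rng.2 ?_
      have : (Subtype.val ∘ e) = fun a => Tc a := by
        funext a
        exact hecoe a
      rw [this]
      exact Tc.continuous
    have hcont2 : Continuous e.symm := by
      refine AddMonoidHomClass.continuous_of_bound (e.symm.toLinearMap) (4/(3*η)) (fun w => ?_)
      have h1 : Tc (e.symm w) = (w : E) := by
        have := hecoe (e.symm w)
        rw [LinearEquiv.apply_symm_apply] at this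
        exact this.symm
      have h2 : ‖(e.symm w : C₀)‖ ≤ (4/(3*η)) * ‖Tc (e.symm w)‖ := by
        rw [hTcapp]
        exact hTlb _
      rw [h1] at h2
      exact h2
    exact ⟨(ContinuousLinearEquiv.mk e hcont1 hcont2).symm⟩

end Part5


section HubComp
variable {E : Type*} [SeminormedAddCommGroup E] [NormedSpace ℝ E]

lemma hub_comp (w : ℕ → E)
    (hub : ∀ F : Finset ℕ, ∀ σ : ℕ → ℝ, (∀ j, σ j = 1 ∨ σ j = -1) →
      ‖∑ j ∈ F, σ j • w j‖ ≤ 2)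
    (n : ℕ → ℕ) (hn : Function.Injective n) :
    ∀ F : Finset ℕ, ∀ σ : ℕ → ℝ, (∀ j, σ j = 1 ∨ σ j = -1) →
      ‖∑ k ∈ F, σ k • w (n k)‖ ≤ 2 := by
  classical
  intro F σ hσ
  obtain ⟨τ, hτ⟩ : ∃ τ : ℕ → ℝ, ∀ j, τ j =
      if h : ∃ k, k ∈ F ∧ n k = j then σ h.choose else 1 := ⟨_, fun _ => rfl⟩
  have hτs : ∀ j, τ j = 1 ∨ τ j = -1 := by
    intro j
    by_cases h : ∃ k, k ∈ F ∧ n k = j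
    · rw [hτ j, dif_pos h]; exact hσ _
    · rw [hτ j, dif_neg h]; exact Or.inl rfl
  have hsum : ∑ j ∈ F.image n, τ j • w j = ∑ k ∈ F, σ k • w (n k) := by
    rw [Finset.sum_image (fun a _ b _ hab => hn hab)]
    refine Finset.sum_congr rfl (fun k hk => ?_)
    have hex : ∃ k', k' ∈ F ∧ n k' = n k := ⟨k, hk, rfl⟩
    have h1 : τ (n k) = σ hex.choose := by rw [hτ (n k)]; exact dif_pos hex
    have h2 : hex.choose = k := hn hex.choose_spec.2
    rw [h1, h2]
  rw [← hsum]
  exact hub _ τ hτs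

end HubComp

theorem asq_subspace_quotient_no_c0
    (Y : Type*) [NormedAddCommGroup Y] [NormedSpace ℝ Y] [CompleteSpace Y]
    (hY : IsASQ Y) (X : Subspace ℝ Y) (hXc : IsClosed (X : Set Y))
    (hq : ∀ W : Subspace ℝ (Y ⧸ X), IsClosed (W : Set (Y ⧸ X)) → ¬ Nonempty (W ≃L[ℝ] ZeroAtInftyContinuousMap ℕ ℝ)) :
    IsASQ X := by
  classical
  haveI : IsClosed (X : Set Y) := hXc
  intro ε hε N y hy
  set δ : ℝ := min ε 1 / 4 with hδdef
  have hδpos : 0 < δ := by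
    have : 0 < min ε 1 := lt_min hε one_pos
    positivity
  have hδε : δ ≤ ε / 4 := by
    rw [hδdef]
    have := min_le_left ε 1
    linarith
  have hδ1 : δ ≤ 1 / 4 := by
    rw [hδdef]
    have := min_le_right ε 1
    linarith
  set x : Fin N → Y := fun n => (y n : Y) with hx
  have hxu : ∀ n, ‖x n‖ = 1 := fun n => by
    rw [hx]
    show ‖(y n : Y)‖ = 1
    rw [← hy n]
    rfl
  obtain ⟨z, hzu, hzx, hub⟩ := exists_seq hY hδpos x hxu
  set w : ℕ → Y ⧸ X := fun k => Submodule.Quotient.mk (z k) with hw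
  have hwmkq : ∀ k, w k = X.mkQ (z k) := fun k => rfl
  have hub_w : ∀ F : Finset ℕ, ∀ σ : ℕ → ℝ, (∀ j, σ j = 1 ∨ σ j = -1) →
      ‖∑ j ∈ F, σ j • w j‖ ≤ 2 := by
    intro F σ hσ
    have h1 : ∑ j ∈ F, σ j • w j = X.mkQ (∑ j ∈ F, σ j • z j) := by
      rw [map_sum]
      exact Finset.sum_congr rfl (fun j _ => by rw [hwmkq, map_smul])
    rw [h1]
    exact le_trans (Submodule.Quotient.norm_mk_le X _) (hub F σ hσ)
  by_cases hcase : ∃ k, ‖w k‖ < δ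
  · -- some point of the sequence is close to X : done
    obtain ⟨k, hk⟩ := hcase
    obtain ⟨m, hm, hmn⟩ := Submodule.Quotient.norm_mk_lt (w k) (sub_pos.mpr hk)
    have hmδ : ‖m‖ < δ := by
      have : ‖w k‖ + (δ - ‖w k‖) = δ := by ring
      rwa [this] at hmn
    have hmem : z k - m ∈ X := by
      rw [← Submodule.Quotient.eq X]
      exact hm.symm
    set x0 : Y := z k - m with hx0
    have hzx0 : z k - x0 = m := by rw [hx0]; abel
    have hx0n1 : 1 - δ ≤ ‖x0‖ := by
      have h1 : ‖z k‖ - ‖z k - x0‖ ≤ ‖x0‖ := by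
        have := norm_sub_norm_le (z k) x0
        have h2 : ‖z k‖ - ‖x0‖ ≤ ‖z k - x0‖ := norm_sub_norm_le _ _
        linarith
      rw [hzx0, hzu k] at h1
      linarith
    have hx0n2 : ‖x0‖ ≤ 1 + δ := by
      calc ‖x0‖ = ‖z k - m‖ := by rw [hx0]
        _ ≤ ‖z k‖ + ‖m‖ := norm_sub_le _ _
        _ ≤ 1 + δ := by rw [hzu k]; linarith
    have hx0pos : 0 < ‖x0‖ := by linarith
    refine ⟨‖x0‖⁻¹ • ⟨x0, hmem⟩, ?_, ?_⟩
    · show ‖‖x0‖⁻¹ • x0‖ = 1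
      rw [norm_smul, Real.norm_eq_abs, abs_of_pos (inv_pos.mpr hx0pos),
        inv_mul_cancel₀ (ne_of_gt hx0pos)]
    · intro n
      show ‖(y n : Y) - ‖x0‖⁻¹ • x0‖ ≤ 1 + ε
      have h3 : ‖x0 - ‖x0‖⁻¹ • x0‖ = |‖x0‖ - 1| := by
        have heq : x0 - ‖x0‖⁻¹ • x0 = (1 - ‖x0‖⁻¹) • x0 := by
          rw [sub_smul, one_smul]
        rw [heq, norm_smul, Real.norm_eq_abs]
        have h4 : |1 - ‖x0‖⁻¹| * ‖x0‖ = |(1 - ‖x0‖⁻¹) * ‖x0‖| := by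
          rw [abs_mul, abs_of_pos hx0pos]
        rw [h4, sub_mul, one_mul, inv_mul_cancel₀ (ne_of_gt hx0pos)]
      have habs : |‖x0‖ - 1| ≤ δ := abs_le.mpr ⟨by linarith, by linarith⟩
      have h5 : ‖z k - x0‖ ≤ δ := by rw [hzx0]; exact le_of_lt hmδ
      have h6 := hzx k n
      calc ‖(y n : Y) - ‖x0‖⁻¹ • x0‖
          = ‖(x n - z k) + ((z k - x0) + (x0 - ‖x0‖⁻¹ • x0))‖ := by
            rw [hx]; congr 1; abel
        _ ≤ ‖x n - z k‖ + ‖(z k - x0) + (x0 - ‖x0‖⁻¹ • x0)‖ := norm_add_le _ _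
        _ ≤ ‖x n - z k‖ + (‖z k - x0‖ + ‖x0 - ‖x0‖⁻¹ • x0‖) :=
            add_le_add_right (norm_add_le _ _) _
        _ ≤ (1 + δ) + (δ + δ) := by
            rw [h3]
            exact add_le_add h6 (add_le_add h5 habs)
        _ ≤ 1 + ε := by linarith
  · push_neg at hcase
    exfalso
    obtain ⟨n, g, hmono, hg12, hg3, hg4⟩ := exists_sel w hδpos hub_w hcase
    have hub_v := hub_comp w hub_w n hmono.injective
    have hηpos : 0 < δ/8 := by positivity
    obtain ⟨W, hWclosed, hWequiv⟩ := embed_c0 (fun k => w (n k)) g hηpos hub_v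
      (fun i => (hg12 i).1) (fun i => (hg12 i).2) hg3 hg4
    exact hq W hWclosed hWequiv
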